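/- arXiv:2503.08948 — 3 statements merged into one kernel-verified Lean document; each statement's English description precedes it below -/
import Mathlib

section
/- Let C ⊆ {0,1}^n be a binary code such that the set of Hamming distances between distinct codewords has exactly s values, all positive. Then |C| ≤ C(n+s, s) (the binomial coefficient 'n+s choose s'). -/
/-- Hamming distance between Boolean vectors. -/
def hd {n : ℕ} (u v : Fin n → Bool) : ℕ :=
  (Finset.univ.filter (fun j => u j ≠ v j)).card

section aux

variable {n : ℕ}

/-- Indicator monomial of a set of coordinates. -/
noncomputable def chi (S : Finset (Fin n)) : (Fin n → Bool) → ℝ :=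
  fun x => if ∀ j ∈ S, x j = true then 1 else 0

/-- Span of monomials of degree at most k. -/
noncomputable def Pk (n k : ℕ) : Submodule ℝ ((Fin n → Bool) → ℝ) :=
  Submodule.span ℝ (chi '' {S : Finset (Fin n) | S.card ≤ k})

lemma chi_mul (S T : Finset (Fin n)) : chi S * chi T = chi (S ∪ T) := by
  funext x
  simp only [chi, Pi.mul_apply, Finset.mem_union]
  by_cases hS : ∀ j ∈ S, x j = true <;> by_cases hT : ∀ j ∈ T, x j = true
  · rw [if_pos hS, if_pos hT, if_pos ?_]
    · ring
    · rintro j (h | h)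
      exacts [hS j h, hT j h]
  · rw [if_pos hS, if_neg hT, if_neg ?_]
    · ring
    · intro h; exact hT fun j hj => h j (Or.inr hj)
  · rw [if_neg hS, if_pos hT, if_neg ?_]
    · ring
    · intro h; exact hS fun j hj => h j (Or.inl hj)
  · rw [if_neg hS, if_neg hT, if_neg ?_]
    · ring
    · intro h; exact hS fun j hj => h j (Or.inl hj)

lemma Pk_mono {a b : ℕ} (h : a ≤ b) : Pk n a ≤ Pk n b := by
  apply Submodule.span_mono
  exact Set.image_mono fun S hS => le_trans hS h

lemma mul_mem_Pk {a b : ℕ} {f g : (Fin n → Bool) → ℝ}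
    (hf : f ∈ Pk n a) (hg : g ∈ Pk n b) : f * g ∈ Pk n (a + b) := by
  have h := Submodule.mul_mem_mul hf hg
  rw [Pk, Pk, Submodule.span_mul_span] at h
  refine Submodule.span_le.2 ?_ h
  rintro _ ⟨_, ⟨S, hS, rfl⟩, _, ⟨T, hT, rfl⟩, rfl⟩
  apply Submodule.subset_span
  exact ⟨S ∪ T, le_trans (Finset.card_union_le S T) (Nat.add_le_add hS hT), (chi_mul S T).symm⟩

lemma const_mem_Pk (c : ℝ) (k : ℕ) : (fun _ : Fin n → Bool => c) ∈ Pk n k := by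
  have h1 : chi (∅ : Finset (Fin n)) ∈ Pk n k :=
    Submodule.subset_span ⟨∅, by simp, rfl⟩
  have : (fun _ : Fin n → Bool => c) = c • chi (∅ : Finset (Fin n)) := by
    funext x; simp [chi]
  rw [this]
  exact (Pk n k).smul_mem c h1

lemma single_mem_Pk (j : Fin n) :
    (fun x : Fin n → Bool => if x j then (1:ℝ) else 0) ∈ Pk n 1 := by
  refine Submodule.subset_span ⟨{j}, by simp, ?_⟩
  funext x; simp [chi]

lemma hd_mem_Pk (u : Fin n → Bool) :
    (fun x => (hd u x : ℝ)) ∈ Pk n 1 := by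
  have heq : (fun x => (hd u x : ℝ)) =
      ∑ j : Fin n, (fun x => if u j ≠ x j then (1:ℝ) else 0) := by
    funext x
    rw [hd, Finset.card_filter]
    push_cast
    simp
  rw [heq]
  apply Submodule.sum_mem
  intro j _
  by_cases hu : u j = true
  case neg =>
    rw [Bool.not_eq_true] at hu
    have : (fun x : Fin n → Bool => if u j ≠ x j then (1:ℝ) else 0) =
        (fun x : Fin n → Bool => if x j then (1:ℝ) else 0) := by
      funext x; cases hx : x j <;> simp [hu, hx]
    rw [this]; exact single_mem_Pk j
  case pos =>
    have : (fun x : Fin n → Bool => if u j ≠ x j then (1:ℝ) else 0) =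
        (fun _ : Fin n → Bool => (1:ℝ)) - (fun x : Fin n → Bool => if x j then (1:ℝ) else 0) := by
      funext x; cases hx : x j <;> simp [hu, hx]
    rw [this]
    exact Submodule.sub_mem _ (const_mem_Pk 1 1) (single_mem_Pk j)

lemma prod_mem_Pk (u : Fin n → Bool) (D : Finset ℕ) :
    (fun x => ∏ d ∈ D, ((d : ℝ) - hd u x)) ∈ Pk n D.card := by
  classical
  induction D using Finset.induction with
  | empty => simpa using const_mem_Pk 1 0
  | @insert a D' hnotin ih =>
    have heq : (fun x => ∏ d ∈ insert a D', ((d : ℝ) - hd u x)) =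
        (fun x => ((a : ℝ) - hd u x)) * (fun x => ∏ d ∈ D', ((d : ℝ) - hd u x)) := by
      funext x; simp [Finset.prod_insert hnotin]
    rw [heq, Finset.card_insert_of_notMem hnotin]
    have h1 : (fun x : Fin n → Bool => ((a : ℝ) - hd u x)) ∈ Pk n 1 :=
      Submodule.sub_mem _ (const_mem_Pk a 1) (hd_mem_Pk u)
    have h2 := mul_mem_Pk h1 ih
    rwa [add_comm] at h2

lemma card_filter_card_le (s : ℕ) :
    ((Finset.univ : Finset (Finset (Fin n))).filter (fun S => S.card ≤ s)).card
      = ∑ i ∈ Finset.range (s+1), n.choose i := by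
  classical
  have hT : (Finset.univ : Finset (Finset (Fin n))).filter (fun S => S.card ≤ s)
      = (Finset.range (s+1)).biUnion (fun i => Finset.powersetCard i Finset.univ) := by
    ext S
    simp [Finset.mem_powersetCard_univ, Finset.mem_biUnion, Nat.lt_succ_iff]
  rw [hT, Finset.card_biUnion]
  · apply Finset.sum_congr rfl
    intro i _
    rw [Finset.card_powersetCard, Finset.card_univ, Fintype.card_fin]
  · intro i _ j _ hij
    unfold Function.onFun
    rw [Finset.disjoint_left]
    intro S hS hS'
    rw [Finset.mem_powersetCard_univ] at hS hS'
    omega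

lemma sum_choose_le (n s : ℕ) :
    ∑ i ∈ Finset.range (s+1), n.choose i ≤ (n+s).choose s := by
  induction s with
  | zero => simp
  | succ s ih =>
    rw [Finset.sum_range_succ]
    have h1 : n.choose (s+1) ≤ (n+s).choose (s+1) := Nat.choose_le_choose _ (by omega)
    calc ∑ i ∈ Finset.range (s+1), n.choose i + n.choose (s+1)
        ≤ (n+s).choose s + (n+s).choose (s+1) := Nat.add_le_add ih h1
      _ = (n+s+1).choose (s+1) := (Nat.choose_succ_succ' _ _).symm.trans (by rw [Nat.choose_succ_succ])
      _ = (n+(s+1)).choose (s+1) := by ring_nf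


end aux

theorem stmt5 {n s : ℕ} (C : Finset (Fin n → Bool)) (D : Finset ℕ)
    (hcard : D.card = s) (hpos : ∀ d ∈ D, 0 < d)
    (hset : {m | ∃ u ∈ C, ∃ v ∈ C, u ≠ v ∧ hd u v = m} = ↑D) :
    C.card ≤ (n + s).choose s := by
  classical
  set F : (Fin n → Bool) → (Fin n → Bool) → ℝ :=
    fun u x => ∏ d ∈ D, ((d:ℝ) - hd u x) with hF
  have hdself : ∀ u : Fin n → Bool, hd u u = 0 := by intro u; simp [hd]
  have hdmem : ∀ u ∈ C, ∀ v ∈ C, u ≠ v → hd u v ∈ D := by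
    intro u hu v hv huv
    have h : hd u v ∈ ({m | ∃ u ∈ C, ∃ v ∈ C, u ≠ v ∧ hd u v = m} : Set ℕ) :=
      ⟨u, hu, v, hv, huv, rfl⟩
    rw [hset] at h
    exact_mod_cast h
  have hFvanish : ∀ u ∈ C, ∀ v ∈ C, u ≠ v → F u v = 0 := by
    intro u hu v hv huv
    apply Finset.prod_eq_zero (hdmem u hu v hv huv)
    simp
  have hFself : ∀ u : Fin n → Bool, F u u ≠ 0 := by
    intro u
    rw [hF]
    simp only [hdself, Nat.cast_zero, sub_zero]
    rw [Finset.prod_ne_zero_iff]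
    intro d hd'
    exact_mod_cast (hpos d hd').ne'
  have hmem : ∀ u : Fin n → Bool, F u ∈ Pk n s := by
    intro u; rw [← hcard]; exact prod_mem_Pk u D
  set W := Pk n s with hW
  let F' : ↥C → ↥W := fun u => ⟨F u, hmem u⟩
  have hli : LinearIndependent ℝ F' := by
    rw [Fintype.linearIndependent_iff]
    intro g hg i
    have hg' : ∑ u : ↥C, g u • F (u : Fin n → Bool) = 0 := by
      have h := congrArg (W.subtype) hg
      simpa [F'] using h
    have h2 := congrFun hg' (i : Fin n → Bool)
    simp only [Finset.sum_apply, Pi.smul_apply, smul_eq_mul, Pi.zero_apply] at h2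
    rw [Finset.sum_eq_single i] at h2
    · have := hFself (i : Fin n → Bool)
      exact (mul_eq_zero.1 h2).resolve_right this
    · intro j _ hji
      have hne : (j : Fin n → Bool) ≠ (i : Fin n → Bool) := fun h => hji (Subtype.ext h)
      rw [hFvanish _ j.2 _ i.2 hne, mul_zero]
    · intro h; exact absurd (Finset.mem_univ i) h
  have hfd : FiniteDimensional ℝ ↥W := by
    infer_instance
  have h1 : Fintype.card ↥C ≤ Module.finrank ℝ ↥W := hli.fintype_card_le_finrank
  rw [Fintype.card_coe] at h1
  set T : Finset (Finset (Fin n)) :=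
    (Finset.univ : Finset (Finset (Fin n))).filter (fun S => S.card ≤ s) with hT
  have hWspan : W = Submodule.span ℝ ↑(T.image chi) := by
    rw [hW, Pk, Finset.coe_image]
    congr 1
    rw [hT, Finset.coe_filter]
    simp
  have h2 : Module.finrank ℝ ↥W ≤ (T.image chi).card := by
    rw [hWspan]
    exact finrank_span_finset_le_card _
  calc C.card ≤ Module.finrank ℝ ↥W := h1
    _ ≤ (T.image chi).card := h2
    _ ≤ T.card := Finset.card_image_le
    _ = ∑ i ∈ Finset.range (s+1), n.choose i := card_filter_card_le s
    _ ≤ (n+s).choose s := sum_choose_le n s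
end

section
/- Let C ⊆ {0,1}^n be a code with exactly s positive pairwise distances. Then |C| ≤ C(n+s, s) - Σ_{t : 2t ≤ s} (C(t+n-1, t) - p(t)), where p(t) is the number of partitions of t. -/
open Finset

noncomputable section
namespace S11

variable {n : ℕ}

def chi (S : Finset (Fin n)) : (Fin n → Bool) → ℝ :=
  fun x => if ∀ j ∈ S, x j = true then 1 else 0

def gens (n k : ℕ) : Finset ((Fin n → Bool) → ℝ) :=
  (Finset.univ.filter (fun S : Finset (Fin n) => S.card ≤ k)).image chi

def Msp (n k : ℕ) : Submodule ℝ ((Fin n → Bool) → ℝ) :=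
  Submodule.span ℝ (↑(gens n k))

lemma chi_mul (S T : Finset (Fin n)) : chi S * chi T = chi (S ∪ T) := by
  funext x
  simp only [chi, Pi.mul_apply, mem_union, or_imp, forall_and]
  by_cases hS : ∀ j ∈ S, x j = true <;> by_cases hT : ∀ j ∈ T, x j = true
  · rw [if_pos hS, if_pos hT, if_pos ⟨hS, hT⟩, mul_one]
  · have hn : ¬((∀ j ∈ S, x j = true) ∧ ∀ j ∈ T, x j = true) := by tauto
    rw [if_neg hT, mul_zero, if_neg hn]
  · have hn : ¬((∀ j ∈ S, x j = true) ∧ ∀ j ∈ T, x j = true) := by tauto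
    rw [if_neg hS, zero_mul, if_neg hn]
  · have hn : ¬((∀ j ∈ S, x j = true) ∧ ∀ j ∈ T, x j = true) := by tauto
    rw [if_neg hS, zero_mul, if_neg hn]

lemma chi_mem {S : Finset (Fin n)} {k : ℕ} (h : S.card ≤ k) : chi S ∈ Msp n k :=
  Submodule.subset_span (by
    simp only [gens, coe_image, Set.mem_image, mem_coe, mem_filter, mem_univ, true_and]
    exact ⟨S, h, rfl⟩)

lemma Msp_mono {k k' : ℕ} (h : k ≤ k') : Msp n k ≤ Msp n k' := by
  apply Submodule.span_mono
  intro f hf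
  simp only [gens, coe_image, Set.mem_image, mem_coe, mem_filter, mem_univ, true_and] at hf ⊢
  obtain ⟨S, hS, rfl⟩ := hf
  exact ⟨S, hS.trans h, rfl⟩

lemma mul_mem_Msp {p q : (Fin n → Bool) → ℝ} {a b : ℕ}
    (hp : p ∈ Msp n a) (hq : q ∈ Msp n b) : p * q ∈ Msp n (a + b) := by
  have base : ∀ S : Finset (Fin n), S.card ≤ a → chi S * q ∈ Msp n (a + b) := by
    intro S hS
    refine Submodule.span_induction (p := fun q _ => chi S * q ∈ Msp n (a + b))
      ?_ ?_ ?_ ?_ hq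
    · intro x hx
      simp only [gens, coe_image, Set.mem_image, mem_coe, mem_filter, mem_univ, true_and] at hx
      obtain ⟨T, hT, rfl⟩ := hx
      rw [chi_mul]
      exact chi_mem ((Finset.card_union_le S T).trans (Nat.add_le_add hS hT))
    · simp only [mul_zero]; exact Submodule.zero_mem _
    · intro x y _ _ h1 h2
      rw [mul_add]; exact Submodule.add_mem _ h1 h2
    · intro r x _ h1
      rw [mul_smul_comm]; exact Submodule.smul_mem _ _ h1
  refine Submodule.span_induction (p := fun p _ => p * q ∈ Msp n (a + b)) ?_ ?_ ?_ ?_ hp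
  · intro x hx
    simp only [gens, coe_image, Set.mem_image, mem_coe, mem_filter, mem_univ, true_and] at hx
    obtain ⟨S, hS, rfl⟩ := hx
    exact base S hS
  · simp only [zero_mul]; exact Submodule.zero_mem _
  · intro x y _ _ h1 h2
    rw [add_mul]; exact Submodule.add_mem _ h1 h2
  · intro r x _ h1
    rw [smul_mul_assoc]; exact Submodule.smul_mem _ _ h1

lemma one_eq_chi_empty : (1 : (Fin n → Bool) → ℝ) = chi ∅ := by
  funext x; simp [chi]

lemma factor_mem (c : Fin n → Bool) (d : ℕ) :
    (fun x => (d : ℝ) - (hd x c : ℝ)) ∈ Msp n 1 := by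
  have hsum : ∀ x : Fin n → Bool, ((hd x c : ℝ))
      = ∑ j : Fin n, (if x j ≠ c j then (1:ℝ) else 0) := by
    intro x
    rw [hd, Finset.card_filter]
    push_cast
    simp
  have heq : (fun x => (d : ℝ) - (hd x c : ℝ))
      = (d : ℝ) • chi (∅ : Finset (Fin n))
        - ∑ j : Fin n, (fun x => if x j ≠ c j then (1:ℝ) else 0) := by
    funext x
    simp only [Pi.sub_apply, Pi.smul_apply, smul_eq_mul, Finset.sum_apply]
    rw [hsum x]
    simp [chi]
  rw [heq]
  apply sub_mem
  · exact Submodule.smul_mem _ _ (chi_mem (by simp))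
  · apply sum_mem
    intro j _
    cases hcj : c j with
    | false =>
        have h2 : (fun x : Fin n → Bool => if x j ≠ false then (1:ℝ) else 0) = chi {j} := by
          funext x
          simp only [chi, Finset.mem_singleton, forall_eq]
          cases hx : x j <;> simp
        rw [h2]
        exact chi_mem (by simp)
    | true =>
        have h2 : (fun x : Fin n → Bool => if x j ≠ true then (1:ℝ) else 0)
            = chi ∅ - chi {j} := by
          funext x
          simp only [chi, Finset.mem_singleton, forall_eq, Pi.sub_apply]
          cases hx : x j <;> simp
        rw [h2]
        exact sub_mem (chi_mem (by simp)) (chi_mem (by simp))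

lemma prod_mem_Msp (c : Fin n → Bool) (E : Finset ℕ) :
    (∏ d ∈ E, (fun x => (d : ℝ) - (hd x c : ℝ))) ∈ Msp n E.card := by
  induction E using Finset.induction_on with
  | empty =>
      rw [Finset.prod_empty, one_eq_chi_empty]
      exact chi_mem (by simp)
  | @insert a E' hni ih =>
      rw [Finset.prod_insert hni, Finset.card_insert_of_notMem hni]
      have := mul_mem_Msp (factor_mem c a) ih
      rwa [Nat.add_comm] at this


lemma card_le {n : ℕ} (C : Finset (Fin n → Bool)) (D : Finset ℕ)
    (hpos : ∀ d ∈ D, 0 < d)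
    (hmem : ∀ u ∈ C, ∀ v ∈ C, u ≠ v → hd u v ∈ D) :
    C.card ≤ ∑ i ∈ range (D.card + 1), n.choose i := by
  classical
  set s := D.card with hs
  set F : (Fin n → Bool) → ((Fin n → Bool) → ℝ) :=
    fun c => ∏ d ∈ D, (fun x => (d:ℝ) - (hd x c : ℝ)) with hF
  have hFmem : ∀ c, F c ∈ Msp n s := fun c => prod_mem_Msp c D
  have hdd : ∀ c : Fin n → Bool, hd c c = 0 := by
    intro c; simp [hd]
  have hdiag : ∀ c, F c c ≠ 0 := by
    intro c
    rw [hF]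
    simp only [Finset.prod_apply]
    rw [Finset.prod_ne_zero_iff]
    intro d hdD
    rw [hdd]
    have := hpos d hdD
    push_cast
    simp
    omega
  have hoff : ∀ c ∈ C, ∀ c' ∈ C, c ≠ c' → F c c' = 0 := by
    intro c hc c' hc' hne
    have hmem' : hd c' c ∈ D := hmem c' hc' c hc (fun h => hne h.symm)
    rw [hF]
    simp only [Finset.prod_apply]
    exact Finset.prod_eq_zero hmem' (by simp)
  haveI : Module.Finite ℝ (Msp n s) := by
    unfold Msp
    infer_instance
  set g : ↥C → ↥(Msp n s) := fun c => ⟨F ↑c, hFmem ↑c⟩ with hg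
  have hli : LinearIndependent ℝ g := by
    rw [Fintype.linearIndependent_iff]
    intro a ha i
    have h0 : (∑ c : ↥C, a c • F ↑c) = 0 := by
      have := congrArg (Submodule.subtype (Msp n s)) ha
      simpa [hg] using this
    have h1 := congrFun h0 ↑i
    rw [Finset.sum_apply] at h1
    simp only [Pi.smul_apply, smul_eq_mul, Pi.zero_apply] at h1
    rw [Finset.sum_eq_single i] at h1
    · have := hdiag (↑i : Fin n → Bool)
      have h2 := mul_eq_zero.mp h1
      tauto
    · intro b _ hbi
      have : F ↑b ↑i = 0 :=
        hoff ↑b b.2 ↑i i.2 (fun h => hbi (Subtype.ext h))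
      rw [this, mul_zero]
    · intro h; exact absurd (Finset.mem_univ i) h
  have hcard1 : C.card = Fintype.card ↥C := (Fintype.card_coe C).symm
  have hcard2 : Fintype.card ↥C ≤ Module.finrank ℝ (Msp n s) :=
    hli.fintype_card_le_finrank
  have hcard3 : Module.finrank ℝ (Msp n s) ≤ (gens n s).card :=
    finrank_span_finset_le_card (gens n s)
  have hcard4 : (gens n s).card
      ≤ (Finset.univ.filter (fun S : Finset (Fin n) => S.card ≤ s)).card :=
    Finset.card_image_le
  have hcard5 : (Finset.univ.filter (fun S : Finset (Fin n) => S.card ≤ s)).card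
      = ∑ i ∈ range (s + 1), n.choose i := by
    have hbi : (Finset.univ.filter (fun S : Finset (Fin n) => S.card ≤ s))
        = (range (s+1)).biUnion (fun i => Finset.powersetCard i Finset.univ) := by
      ext S
      simp [Finset.mem_powersetCard, Nat.lt_succ_iff]
    rw [hbi, Finset.card_biUnion]
    · apply Finset.sum_congr rfl
      intro i _
      rw [Finset.card_powersetCard, Finset.card_univ, Fintype.card_fin]
    · intro i _ j _ hij
      rw [Function.onFun, Finset.disjoint_left]
      intro S hSi hSj
      rw [Finset.mem_powersetCard] at hSi hSj
      exact hij (hSi.2 ▸ hSj.2)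
  omega


end S11
end



lemma hockey' (m s : ℕ) : ∑ i ∈ range (s+1), (m + i).choose i = (m + s + 1).choose s := by
  induction s with
  | zero => simp
  | succ k ih =>
      rw [sum_range_succ, ih]
      have : (m + (k+1) + 1).choose (k+1) = (m + k + 1).choose k + (m + k + 1).choose (k+1) := by
        have := Nat.choose_succ_succ' (m + k + 1) k
        convert this using 2
        omega
      rw [this]
      norm_num
      congr 1

lemma hockey (n s : ℕ) : ∑ i ∈ range (s+1), (i + n - 1).choose i = (n + s).choose s := by
  cases n with
  | zero =>
      rw [Nat.zero_add, Nat.choose_self]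
      rw [Finset.sum_eq_single 0]
      · simp
      · intro i _ hi
        apply Nat.choose_eq_zero_of_lt
        omega
      · simp
  | succ m =>
      have : ∀ i, (i + (m+1) - 1).choose i = (m + i).choose i := by
        intro i; congr 1; omega
      simp only [this]
      rw [hockey']
      congr 1
      omega

lemma reindex_even (s : ℕ) (F : ℕ → ℕ) :
    ∑ i ∈ (range (s+1)).filter (fun i => Even i), F i
      = ∑ t ∈ range (s/2 + 1), F (2*t) := by
  apply Finset.sum_nbij' (fun i => i / 2) (fun t => 2 * t)
  · intro i hi
    simp only [mem_filter, mem_range] at hi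
    simp only [mem_range]
    obtain ⟨k, hk⟩ := hi.2
    omega
  · intro t ht
    simp only [mem_range] at ht
    simp only [mem_filter, mem_range]
    constructor
    · omega
    · exact ⟨t, by omega⟩
  · intro i hi
    simp only [mem_filter, mem_range] at hi
    obtain ⟨k, hk⟩ := hi.2
    omega
  · intro t ht; omega
  · intro i hi
    simp only [mem_filter, mem_range] at hi
    obtain ⟨k, hk⟩ := hi.2
    congr 1
    omega

lemma ppos (t : ℕ) : 0 < Fintype.card (Nat.Partition t) := Fintype.card_pos

lemma key (n t : ℕ) (ht : 1 ≤ t) :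
    (t + n - 1).choose t + n.choose (2*t) ≤ (2*t + n - 1).choose (2*t) := by
  have e1 : (t + n - 1).choose t = Fintype.card (Sym (Fin n) t) := by
    rw [Sym.card_sym_eq_multichoose, Nat.multichoose_eq, Fintype.card_fin, Nat.add_comm n t]
  have e2 : (2*t + n - 1).choose (2*t) = Fintype.card (Sym (Fin n) (2*t)) := by
    rw [Sym.card_sym_eq_multichoose, Nat.multichoose_eq, Fintype.card_fin, Nat.add_comm n (2*t)]
  have e3 : n.choose (2*t) = Fintype.card {s : Finset (Fin n) // s.card = 2*t} := by
    rw [Fintype.card_finset_len, Fintype.card_fin]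
  rw [e1, e2, e3, ← Fintype.card_sum]
  apply Fintype.card_le_of_injective
    (fun x => match x with
      | Sum.inl m => Sym.cast (two_mul t).symm (m.append m)
      | Sum.inr s => ⟨s.1.val, s.2⟩)
  rintro (a | a) (b | b) h
  · simp only [Sym.cast, Equiv.coe_fn_mk] at h
    have : (a : Multiset (Fin n)) + a = (b : Multiset (Fin n)) + b := by
      have := congrArg Sym.toMultiset h
      exact this
    have : (a : Multiset (Fin n)) = b := by
      ext x
      have := congrArg (Multiset.count x) this
      simp [Multiset.count_add] at this
      omega
    exact congrArg Sum.inl (Subtype.ext this)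
  · exfalso
    have hm : (a : Multiset (Fin n)) + a = b.1.val := by
      have := congrArg Sym.toMultiset h
      exact this
    have hb : b.1.Nonempty := by
      rw [← Finset.card_pos, b.2]; omega
    obtain ⟨x, hx⟩ := hb
    have h1 : Multiset.count x b.1.val = 1 :=
      Multiset.count_eq_one_of_mem b.1.nodup hx
    have := congrArg (Multiset.count x) hm
    rw [Multiset.count_add, h1] at this
    omega
  · exfalso
    have hm : (b : Multiset (Fin n)) + b = a.1.val := by
      have := congrArg Sym.toMultiset h.symm
      exact this
    have ha : a.1.Nonempty := by
      rw [← Finset.card_pos, a.2]; omega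
    obtain ⟨x, hx⟩ := ha
    have h1 : Multiset.count x a.1.val = 1 :=
      Multiset.count_eq_one_of_mem a.1.nodup hx
    have := congrArg (Multiset.count x) hm
    rw [Multiset.count_add, h1] at this
    omega
  · have : a.1.val = b.1.val := congrArg Sym.toMultiset h
    exact congrArg Sum.inr (Subtype.ext (Finset.val_injective this))

lemma key' (n t : ℕ) :
    ((t + n - 1).choose t - Fintype.card (Nat.Partition t)) + n.choose (2*t)
      ≤ (2*t + n - 1).choose (2*t) := by
  rcases Nat.eq_zero_or_pos t with rfl | ht
  · have := ppos 0
    simp only [Nat.mul_zero, Nat.choose_zero_right] at *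
    omega
  · calc ((t + n - 1).choose t - Fintype.card (Nat.Partition t)) + n.choose (2*t)
        ≤ (t + n - 1).choose t + n.choose (2*t) := by
          gcongr; exact Nat.sub_le _ _
      _ ≤ (2*t + n - 1).choose (2*t) := key n t ht

lemma bleA (n i : ℕ) : n.choose i ≤ (i + n - 1).choose i := by
  cases i with
  | zero => simp
  | succ k =>
      apply Nat.choose_le_choose
      omega

lemma arith (n s : ℕ) :
    ∑ i ∈ range (s+1), n.choose i
      + ∑ t ∈ range (s/2 + 1), ((t + n - 1).choose t - Fintype.card (Nat.Partition t))
      ≤ (n + s).choose s := by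
  rw [← hockey]
  rw [← Finset.sum_filter_add_sum_filter_not (range (s+1)) (fun i => Even i) (fun i => n.choose i),
      ← Finset.sum_filter_add_sum_filter_not (range (s+1)) (fun i => Even i) (fun i => (i + n - 1).choose i),
      reindex_even s (fun i => n.choose i), reindex_even s (fun i => (i + n - 1).choose i)]
  have h1 : ∑ t ∈ range (s/2+1), n.choose (2*t)
      + ∑ t ∈ range (s/2 + 1), ((t + n - 1).choose t - Fintype.card (Nat.Partition t))
      ≤ ∑ t ∈ range (s/2+1), (2*t + n - 1).choose (2*t) := by
    rw [← Finset.sum_add_distrib]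
    apply Finset.sum_le_sum
    intro t _
    rw [Nat.add_comm]
    exact key' n t
  have h2 : ∑ i ∈ (range (s+1)).filter (fun i => ¬ Even i), n.choose i
      ≤ ∑ i ∈ (range (s+1)).filter (fun i => ¬ Even i), (i + n - 1).choose i :=
    Finset.sum_le_sum (fun i _ => bleA n i)
  omega

theorem stmt11 {n s : ℕ} (C : Finset (Fin n → Bool)) (D : Finset ℕ)
    (hcard : D.card = s) (hpos : ∀ d ∈ D, 0 < d)
    (hset : {m | ∃ u ∈ C, ∃ v ∈ C, u ≠ v ∧ hd u v = m} = ↑D) :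
    C.card ≤ (n + s).choose s -
      ∑ t ∈ Finset.range (s / 2 + 1),
        ((t + n - 1).choose t - Fintype.card (Nat.Partition t)) := by
  have hmem : ∀ u ∈ C, ∀ v ∈ C, u ≠ v → hd u v ∈ D := by
    intro u hu v hv huv
    have hx : hd u v ∈ ({m | ∃ u ∈ C, ∃ v ∈ C, u ≠ v ∧ hd u v = m} : Set ℕ) :=
      ⟨u, hu, v, hv, huv, rfl⟩
    rw [hset] at hx
    exact hx
  have h1 := S11.card_le C D hpos hmem
  rw [hcard] at h1
  have h2 := arith n s
  omega
end

section
/- Let C be a binary code of length n ≥ 6 with at most two distinct pairwise distances. Assuming the bound A_2(n,{d_1,d_2}) ≤ C(n,2)+1 from Barg et al., the code consisting of all weight-2 words together with the zero word achieves this bound: it has distances {2,4} and size C(n,2)+1. -/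
/-- Hamming weight of a Boolean vector. -/
def wt {n : ℕ} (u : Fin n → Bool) : ℕ :=
  (Finset.univ.filter (fun j => u j = true)).card

open Finset

lemma hd_symm {n : ℕ} (u v : Fin n → Bool) : hd u v = hd v u := by
  unfold hd; congr 1; ext j; simp [ne_comm]

lemma hd_zero {n : ℕ} (u : Fin n → Bool) : hd (fun _ => false) u = wt u := by
  unfold hd wt; congr 1; ext j; cases u j <;> simp

lemma hd_eq_symmDiff {n : ℕ} (u v : Fin n → Bool) :
    hd u v = (symmDiff (univ.filter fun j => u j = true) (univ.filter fun j => v j = true)).card := by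
  unfold hd; congr 1; ext j
  simp only [Finset.mem_symmDiff, Finset.mem_filter, Finset.mem_univ, true_and]
  cases u j <;> cases v j <;> simp

lemma supp_eq_iff {n : ℕ} (u v : Fin n → Bool) :
    (univ.filter fun j => u j = true) = (univ.filter fun j => v j = true) ↔ u = v := by
  constructor
  · intro h
    funext j
    have := Finset.ext_iff.mp h j
    simp only [Finset.mem_filter, Finset.mem_univ, true_and] at this
    cases hu : u j <;> cases hv : v j <;> simp_all
  · rintro rfl; rfl

lemma hd_two {n : ℕ} (u v : Fin n → Bool) (hu : wt u = 2) (hv : wt v = 2) (huv : u ≠ v) :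
    hd u v = 2 ∨ hd u v = 4 := by
  set A := univ.filter fun j => u j = true with hA
  set B := univ.filter fun j => v j = true with hB
  have hAB : A ≠ B := fun h => huv ((supp_eq_iff u v).mp h)
  have h1 : (A \ B).card + (A ∩ B).card = A.card := Finset.card_sdiff_add_card_inter A B
  have h2 : (B \ A).card + (B ∩ A).card = B.card := Finset.card_sdiff_add_card_inter B A
  have hBA : (B ∩ A).card = (A ∩ B).card := by rw [Finset.inter_comm]
  have hcard : hd u v = (A \ B).card + (B \ A).card := by
    rw [hd_eq_symmDiff, symmDiff_def, Finset.sup_eq_union,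
      Finset.card_union_of_disjoint (disjoint_sdiff_sdiff)]
  have hAc : A.card = 2 := hu
  have hBc : B.card = 2 := hv
  have hiA : (A ∩ B).card ≤ 2 := le_trans (Finset.card_le_card inter_subset_left) (le_of_eq hAc)
  have hne2 : (A ∩ B).card ≠ 2 := by
    intro h2
    have h1 : A ∩ B = A := Finset.eq_of_subset_of_card_le inter_subset_left (by omega)
    have h2' : A ∩ B = B := Finset.eq_of_subset_of_card_le inter_subset_right (by omega)
    exact hAB (h1.symm.trans h2')
  omega

lemma card_wt_two {n : ℕ} :
    (univ.filter fun u : Fin n → Bool => wt u = 2).card = n.choose 2 := by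
  have key : (univ.filter fun u : Fin n → Bool => wt u = 2).card =
      (Finset.powersetCard 2 (univ : Finset (Fin n))).card := by
    apply Finset.card_bij (fun u _ => univ.filter fun j => u j = true)
    · intro u hu
      simp only [Finset.mem_filter, Finset.mem_univ, true_and] at hu
      simp only [Finset.mem_powersetCard]
      exact ⟨Finset.subset_univ _, hu⟩
    · intro u hu v hv h
      exact (supp_eq_iff u v).mp h
    · intro s hs
      simp only [Finset.mem_powersetCard] at hs
      refine ⟨fun j => decide (j ∈ s), ?_, ?_⟩
      · simp only [Finset.mem_filter, Finset.mem_univ, true_and, wt]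
        rw [← hs.2]
        refine Finset.mem_filter.mpr ⟨Finset.mem_univ _, ?_⟩
        congr 1; ext j; simp
      · ext j; simp
  rw [key, Finset.card_powersetCard, Finset.card_univ, Fintype.card_fin]

theorem stmt14 {n : ℕ} (hn : 6 ≤ n)
    (hbound : ∀ (d1 d2 : ℕ) (C : Finset (Fin n → Bool)),
      (∀ u ∈ C, ∀ v ∈ C, u ≠ v → hd u v = d1 ∨ hd u v = d2) →
        C.card ≤ n.choose 2 + 1) :
    ({m | ∃ u ∈ Finset.univ.filter (fun u : Fin n → Bool => wt u = 2) ∪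
            {fun _ => false},
        ∃ v ∈ Finset.univ.filter (fun u : Fin n → Bool => wt u = 2) ∪
            {fun _ => false}, u ≠ v ∧ hd u v = m} = {2, 4}) ∧
    (Finset.univ.filter (fun u : Fin n → Bool => wt u = 2) ∪
        {fun _ => false}).card = n.choose 2 + 1 := by
  have hz : wt (fun _ : Fin n => false) = 0 := by simp [wt]
  -- witnesses
  set u0 : Fin n → Bool := fun j => decide ((j : ℕ) < 2) with hu0
  set v0 : Fin n → Bool := fun j => decide (2 ≤ (j : ℕ) ∧ (j : ℕ) < 4) with hv0
  have hwu0 : wt u0 = 2 := by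
    unfold wt
    have : (univ.filter fun j : Fin n => u0 j = true) = {⟨0, by omega⟩, ⟨1, by omega⟩} := by
      ext j
      simp [hu0, Fin.ext_iff]
      omega
    rw [this]
    rw [Finset.card_insert_of_notMem (by simp [Fin.ext_iff]), Finset.card_singleton]
  have hwv0 : wt v0 = 2 := by
    unfold wt
    have : (univ.filter fun j : Fin n => v0 j = true) = {⟨2, by omega⟩, ⟨3, by omega⟩} := by
      ext j
      simp [hv0, Fin.ext_iff]
      omega
    rw [this]
    rw [Finset.card_insert_of_notMem (by simp [Fin.ext_iff]), Finset.card_singleton]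
  have hd04 : hd u0 v0 = 4 := by
    unfold hd
    have : (univ.filter fun j : Fin n => u0 j ≠ v0 j) =
        {⟨0, by omega⟩, ⟨1, by omega⟩, ⟨2, by omega⟩, ⟨3, by omega⟩} := by
      ext j
      simp only [hu0, hv0, Finset.mem_filter, Finset.mem_univ, true_and, ne_eq,
        decide_eq_decide, Finset.mem_insert, Finset.mem_singleton, Fin.ext_iff]
      constructor
      · intro h; by_contra hc; push_neg at hc; omega
      · intro h hiff; omega
    rw [this]
    rw [Finset.card_insert_of_notMem (by simp [Fin.ext_iff]),
        Finset.card_insert_of_notMem (by simp [Fin.ext_iff]),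
        Finset.card_insert_of_notMem (by simp [Fin.ext_iff]), Finset.card_singleton]
  have hu0ne : u0 ≠ (fun _ => false) := by
    intro h
    rw [h] at hwu0
    omega
  have hv0ne : u0 ≠ v0 := by
    intro h
    have := congrFun h ⟨0, by omega⟩
    simp [hu0, hv0] at this
  constructor
  · ext m
    simp only [Set.mem_setOf_eq, Set.mem_insert_iff, Set.mem_singleton_iff]
    constructor
    · rintro ⟨u, hu, v, hv, hne, rfl⟩
      simp only [Finset.mem_union, Finset.mem_filter, Finset.mem_univ, true_and,
        Finset.mem_singleton] at hu hv
      rcases hu with hu | rfl <;> rcases hv with hv | rfl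
      · exact (hd_two u v hu hv hne).imp id id
      · left; rw [hd_symm, hd_zero, hu]
      · left; rw [hd_zero, hv]
      · exact absurd rfl hne
    · rintro (rfl | rfl)
      · exact ⟨u0, by simp [hwu0], (fun _ => false), by simp,
          hu0ne, by rw [hd_symm, hd_zero, hwu0]⟩
      · exact ⟨u0, by simp [hwu0], v0, by simp [hwv0], hv0ne, hd04⟩
  · rw [Finset.card_union_of_disjoint, card_wt_two, Finset.card_singleton]
    simp only [Finset.disjoint_singleton_right, Finset.mem_filter, Finset.mem_univ, true_and]
    omega
end
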